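/- arXiv:1903.09986 — 2 statements merged into one kernel-verified Lean document; each statement's English description precedes it below -/
import Mathlib

section
/- For the cycle graph C_n on n ≥ 3 vertices, the Hosoya index equals the Lucas number L_n, where L_0 = 2, L_1 = 1, and L_n = L_{n-1} + L_{n-2}. -/
/-- The Hosoya index of a graph: the number of matchings (sets of pairwise
vertex-disjoint edges), including the empty matching. -/
noncomputable def hosoya {V : Type*} (G : SimpleGraph V) : ℕ :=
  Set.ncard {s : Finset (Sym2 V) | (↑s : Set (Sym2 V)) ⊆ G.edgeSet ∧
    (↑s : Set (Sym2 V)).Pairwise (fun e f => ∀ v : V, ¬(v ∈ e ∧ v ∈ f))}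

open Finset


def good (s : Finset ℕ) : Prop := ∀ i ∈ s, i + 1 ∉ s

instance : DecidablePred good := fun s => by unfold good; infer_instance

def pSets (a k : ℕ) : Finset (Finset ℕ) := (Finset.Ico a (a+k)).powerset.filter good

def pp (k : ℕ) : ℕ := (pSets 0 k).card

lemma good_mono {s t : Finset ℕ} (h : s ⊆ t) (ht : good t) : good s :=
  fun i hi h1 => ht i (h hi) (h h1)

lemma mem_pSets {a k : ℕ} {s : Finset ℕ} :
    s ∈ pSets a k ↔ s ⊆ Finset.Ico a (a+k) ∧ good s := by
  simp [pSets]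

lemma pSets_card (a k : ℕ) : (pSets a k).card = pp k := by
  rw [pp]
  apply Finset.card_nbij' (fun s => s.image (· - a)) (fun s => s.image (· + a))
  · intro s hs
    rw [Finset.mem_coe, mem_pSets] at hs ⊢
    obtain ⟨hsub, hg⟩ := hs
    constructor
    · intro x hx
      simp only [Finset.mem_image] at hx
      obtain ⟨y, hy, rfl⟩ := hx
      have := hsub hy
      simp only [Finset.mem_Ico] at this ⊢
      omega
    · intro i hi h1
      simp only [Finset.mem_image] at hi h1
      obtain ⟨x, hx, rfl⟩ := hi
      obtain ⟨y, hy, hxy⟩ := h1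
      have h1 := hsub hx
      have h2 := hsub hy
      simp only [Finset.mem_Ico] at h1 h2
      have : y = x + 1 := by omega
      exact hg x hx (this ▸ hy)
  · intro s hs
    rw [Finset.mem_coe, mem_pSets] at hs ⊢
    obtain ⟨hsub, hg⟩ := hs
    constructor
    · intro x hx
      simp only [Finset.mem_image] at hx
      obtain ⟨y, hy, rfl⟩ := hx
      have := hsub hy
      simp only [Finset.mem_Ico] at this ⊢
      omega
    · intro i hi h1
      simp only [Finset.mem_image] at hi h1
      obtain ⟨x, hx, rfl⟩ := hi
      obtain ⟨y, hy, hxy⟩ := h1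
      have : y = x + 1 := by omega
      exact hg x hx (this ▸ hy)
  · intro s hs
    rw [Finset.mem_coe, mem_pSets] at hs
    beta_reduce
    rw [Finset.image_image]
    rw [show ((· + a) ∘ (· - a)) = fun x => x - a + a from rfl]
    nth_rewrite 2 [show s = s.image id from (Finset.image_id).symm]
    apply Finset.image_congr
    intro x hx
    have := hs.1 hx
    simp only [Finset.mem_Ico] at this
    simp; omega
  · intro s hs
    rw [Finset.mem_coe, mem_pSets] at hs
    beta_reduce
    rw [Finset.image_image]
    rw [show ((· - a) ∘ (· + a)) = fun x => x + a - a from rfl]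
    nth_rewrite 2 [show s = s.image id from (Finset.image_id).symm]
    apply Finset.image_congr
    intro x _
    simp

lemma pp_zero : pp 0 = 1 := rfl
lemma pp_one : pp 1 = 2 := rfl

lemma pp_rec (k : ℕ) : pp (k+2) = pp (k+1) + pp k := by
  have hsplit := Finset.card_filter_add_card_filter_not
    (s := pSets 0 (k+2)) (p := fun s => k+1 ∈ s)
  have h1 : ((pSets 0 (k+2)).filter (fun s => ¬ (k+1 ∈ s))) = pSets 0 (k+1) := by
    ext s
    simp only [Finset.mem_filter, mem_pSets]
    constructor
    · rintro ⟨⟨hsub, hg⟩, hne⟩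
      refine ⟨?_, hg⟩
      intro x hx
      have := hsub hx
      simp only [Finset.mem_Ico] at this ⊢
      rcases Nat.lt_or_ge x (k+1) with h | h
      · omega
      · exfalso; have : x = k + 1 := by omega
        exact hne (this ▸ hx)
    · rintro ⟨hsub, hg⟩
      refine ⟨⟨?_, hg⟩, fun h => by have := hsub h; simp at this⟩
      intro x hx
      have := hsub hx
      simp only [Finset.mem_Ico] at this ⊢
      omega
  have h2 : ((pSets 0 (k+2)).filter (fun s => k+1 ∈ s)).card = pp k := by
    rw [pp]
    apply Finset.card_nbij' (fun s => s.erase (k+1)) (fun s => insert (k+1) s)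
    · intro s hs
      simp only [Finset.mem_coe, Finset.mem_filter, mem_pSets] at hs
      obtain ⟨⟨hsub, hg⟩, hmem⟩ := hs
      rw [Finset.mem_coe, mem_pSets]
      refine ⟨?_, good_mono (Finset.erase_subset _ _) hg⟩
      intro x hx
      rw [Finset.mem_erase] at hx
      obtain ⟨hne, hx⟩ := hx
      have h3 := hsub hx
      simp only [Finset.mem_Ico] at h3 ⊢
      have : x ≠ k := fun h => hg x hx (by rwa [h])
      omega
    · intro s hs
      rw [Finset.mem_coe, mem_pSets] at hs
      obtain ⟨hsub, hg⟩ := hs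
      simp only [Finset.mem_coe, Finset.mem_filter, mem_pSets]
      have hk1 : k + 1 ∉ s := fun h => by have := hsub h; simp only [Finset.mem_Ico] at this; omega
      refine ⟨⟨?_, ?_⟩, Finset.mem_insert_self _ _⟩
      · intro x hx
        rw [Finset.mem_insert] at hx
        simp only [Finset.mem_Ico]
        rcases hx with rfl | hx
        · omega
        · have := hsub hx; simp only [Finset.mem_Ico] at this; omega
      · intro i hi h1
        rw [Finset.mem_insert] at hi h1
        rcases hi with rfl | hi
        · rcases h1 with h1 | h1
          · omega
          · have := hsub h1; simp only [Finset.mem_Ico] at this; omega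
        · rcases h1 with h1 | h1
          · have : i = k := by omega
            subst this
            have := hsub hi; simp only [Finset.mem_Ico] at this; omega
          · exact hg i hi h1
    · intro s hs
      simp only [Finset.mem_coe, Finset.mem_filter] at hs
      exact Finset.insert_erase hs.2
    · intro s hs
      rw [Finset.mem_coe, mem_pSets] at hs
      apply Finset.erase_insert
      intro h
      have := hs.1 h
      simp only [Finset.mem_Ico] at this
      omega
  have h1' : (Finset.filter (fun s => k + 1 ∉ s) (pSets 0 (k + 2))).card = pp (k+1) := by
    rw [h1]; rfl
  rw [pp, ← hsplit, h2, h1']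
  omega

def cSets (n : ℕ) : Finset (Finset ℕ) :=
  (Finset.range n).powerset.filter (fun s => good s ∧ ¬(0 ∈ s ∧ n-1 ∈ s))

lemma mem_cSets {n : ℕ} {s : Finset ℕ} :
    s ∈ cSets n ↔ s ⊆ Finset.range n ∧ good s ∧ ¬(0 ∈ s ∧ n-1 ∈ s) := by
  simp [cSets]

lemma cSets_card (m : ℕ) : (cSets (m+3)).card = pp (m+2) + pp m := by
  have hsplit := Finset.card_filter_add_card_filter_not
    (s := cSets (m+3)) (p := fun s => 0 ∈ s)
  have h1 : ((cSets (m+3)).filter (fun s => ¬(0 ∈ s))) = pSets 1 (m+2) := by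
    ext s
    simp only [Finset.mem_filter, mem_cSets, mem_pSets]
    constructor
    · rintro ⟨⟨hsub, hg, _⟩, h0⟩
      refine ⟨?_, hg⟩
      intro x hx
      have := hsub hx
      simp only [Finset.mem_range] at this
      simp only [Finset.mem_Ico]
      have : x ≠ 0 := fun h => h0 (h ▸ hx)
      omega
    · rintro ⟨hsub, hg⟩
      have h0 : 0 ∉ s := fun h => by have := hsub h; simp only [Finset.mem_Ico] at this; omega
      refine ⟨⟨?_, hg, fun h => h0 h.1⟩, h0⟩
      intro x hx
      have := hsub hx
      simp only [Finset.mem_Ico] at this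
      simp only [Finset.mem_range]
      omega
  have h1' : ((cSets (m+3)).filter (fun s => ¬(0 ∈ s))).card = pp (m+2) := by
    rw [h1, pSets_card]
  have h2 : ((cSets (m+3)).filter (fun s => 0 ∈ s)).card = pp m := by
    rw [← pSets_card 2 m]
    apply Finset.card_nbij' (fun s => s.erase 0) (fun s => insert 0 s)
    · intro s hs
      simp only [Finset.mem_coe, Finset.mem_filter, mem_cSets] at hs
      obtain ⟨⟨hsub, hg, hc⟩, h0⟩ := hs
      rw [Finset.mem_coe, mem_pSets]
      refine ⟨?_, good_mono (Finset.erase_subset _ _) hg⟩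
      intro x hx
      rw [Finset.mem_erase] at hx
      obtain ⟨hne, hx⟩ := hx
      have h3 := hsub hx
      simp only [Finset.mem_range] at h3
      simp only [Finset.mem_Ico]
      have hx1 : x ≠ 1 := fun h => hg 0 h0 (by rwa [h] at hx)
      have hxm : x ≠ m + 2 := fun h => hc ⟨h0, by simpa [h] using hx⟩
      omega
    · intro s hs
      rw [Finset.mem_coe, mem_pSets] at hs
      obtain ⟨hsub, hg⟩ := hs
      simp only [Finset.mem_coe, Finset.mem_filter, mem_cSets]
      refine ⟨⟨?_, ?_, ?_⟩, Finset.mem_insert_self _ _⟩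
      · intro x hx
        rw [Finset.mem_insert] at hx
        simp only [Finset.mem_range]
        rcases hx with rfl | hx
        · omega
        · have := hsub hx; simp only [Finset.mem_Ico] at this; omega
      · intro i hi h1
        rw [Finset.mem_insert] at hi h1
        rcases hi with rfl | hi
        · rcases h1 with h1 | h1
          · omega
          · have := hsub h1; simp only [Finset.mem_Ico] at this; omega
        · rcases h1 with h1 | h1
          · have := hsub hi; simp only [Finset.mem_Ico] at this; omega
          · exact hg i hi h1
      · rintro ⟨-, hm⟩
        rw [Finset.mem_insert] at hm
        rcases hm with hm | hm
        · omega
        · have := hsub hm; simp only [Finset.mem_Ico] at this; omega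
    · intro s hs
      simp only [Finset.mem_coe, Finset.mem_filter] at hs
      exact Finset.insert_erase hs.2
    · intro s hs
      rw [Finset.mem_coe, mem_pSets] at hs
      apply Finset.erase_insert
      intro h
      have := hs.1 h
      simp only [Finset.mem_Ico] at this
      omega
  omega

lemma lucas_eq (L : ℕ → ℕ) (hL0 : L 0 = 2) (hL1 : L 1 = 1)
    (hLrec : ∀ k, L (k + 2) = L (k + 1) + L k) :
    ∀ m, L (m+3) = pp (m+2) + pp m := by
  intro m
  induction m using Nat.twoStepInduction with
  | zero =>
    show L 3 = pp 2 + pp 0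
    have e1 : L 2 = L 1 + L 0 := hLrec 0
    have e2 : L 3 = L 2 + L 1 := hLrec 1
    have e3 : pp 2 = pp 1 + pp 0 := pp_rec 0
    have p0 := pp_zero; have p1 := pp_one
    omega
  | one =>
    show L 4 = pp 3 + pp 1
    have e1 : L 2 = L 1 + L 0 := hLrec 0
    have e2 : L 3 = L 2 + L 1 := hLrec 1
    have e3 : L 4 = L 3 + L 2 := hLrec 2
    have e4 : pp 2 = pp 1 + pp 0 := pp_rec 0
    have e5 : pp 3 = pp 2 + pp 1 := pp_rec 1
    have p0 := pp_zero; have p1 := pp_one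
    omega
  | more k ih1 ih2 =>
    show L (k+5) = pp (k+4) + pp (k+2)
    have ih1' : L (k+3) = pp (k+2) + pp k := ih1
    have ih2' : L (k+4) = pp (k+3) + pp (k+1) := ih2
    have e1 : L (k+5) = L (k+4) + L (k+3) := hLrec (k+3)
    have e3 : pp (k+4) = pp (k+3) + pp (k+2) := pp_rec (k+2)
    have e4 : pp (k+2) = pp (k+1) + pp k := pp_rec k
    omega

def cSetsF (m : ℕ) : Finset (Finset (Fin (m+3))) :=
  Finset.univ.filter (fun t => ∀ v ∈ t, v + 1 ∉ t)

lemma mem_cSetsF {m : ℕ} {t : Finset (Fin (m+3))} :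
    t ∈ cSetsF m ↔ ∀ v ∈ t, v + 1 ∉ t := by simp [cSetsF]

lemma val_add_one {m : ℕ} (a : Fin (m+3)) : (a + 1).val = (a.val + 1) % (m+3) := by
  rw [Fin.val_add]; rfl

lemma cSetsF_card (m : ℕ) : (cSetsF m).card = (cSets (m+3)).card := by
  apply Finset.card_nbij' (fun t => t.image Fin.val)
    (fun s => Finset.univ.filter (fun v : Fin (m+3) => v.val ∈ s))
  · intro t ht
    rw [Finset.mem_coe, mem_cSetsF] at ht
    rw [Finset.mem_coe, mem_cSets]
    refine ⟨?_, ?_, ?_⟩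
    · intro x hx
      simp only [Finset.mem_image] at hx
      obtain ⟨v, _, rfl⟩ := hx
      simp only [Finset.mem_range]
      exact v.isLt
    · intro x hx hx1
      simp only [Finset.mem_image] at hx hx1
      obtain ⟨v, hv, rfl⟩ := hx
      obtain ⟨w, hw, hvw⟩ := hx1
      apply ht v hv
      have hlt : v.val + 1 < m + 3 := hvw ▸ w.isLt
      have : (v + 1) = w := by
        apply Fin.ext
        rw [val_add_one, Nat.mod_eq_of_lt hlt, hvw]
      exact this ▸ hw
    · rintro ⟨h0, hm⟩
      simp only [Finset.mem_image] at h0 hm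
      obtain ⟨v, hv, hv0⟩ := h0
      obtain ⟨w, hw, hwm⟩ := hm
      apply ht w hw
      have : (w + 1) = v := by
        apply Fin.ext
        rw [val_add_one, hwm, hv0]
        simp
      exact this ▸ hv
  · intro s hs
    rw [Finset.mem_coe, mem_cSets] at hs
    obtain ⟨hsub, hg, hc⟩ := hs
    rw [Finset.mem_coe, mem_cSetsF]
    intro v hv hv1
    simp only [Finset.mem_filter, Finset.mem_univ, true_and] at hv hv1
    rw [val_add_one] at hv1
    rcases Nat.lt_or_ge (v.val + 1) (m+3) with h | h
    · rw [Nat.mod_eq_of_lt h] at hv1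
      exact hg v.val hv hv1
    · have hv2 : v.val = m + 2 := by have := v.isLt; omega
      rw [hv2] at hv1
      simp only [Nat.mod_self] at hv1
      have hm2 : m + 2 ∈ s := hv2 ▸ hv
      exact hc ⟨hv1, hm2⟩
  · intro t ht
    ext v
    simp only [Finset.mem_filter, Finset.mem_univ, true_and, Finset.mem_image]
    constructor
    · rintro ⟨w, hw, hvw⟩
      rwa [← Fin.val_injective hvw]
    · intro hv
      exact ⟨v, hv, rfl⟩
  · intro s hs
    rw [Finset.mem_coe, mem_cSets] at hs
    ext x
    simp only [Finset.mem_image, Finset.mem_filter, Finset.mem_univ, true_and]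
    constructor
    · rintro ⟨v, hv, rfl⟩
      exact hv
    · intro hx
      have := hs.1 hx
      simp only [Finset.mem_range] at this
      exact ⟨⟨x, this⟩, hx, rfl⟩

lemma fin_two_ne_zero (m : ℕ) : (2 : Fin (m+3)) ≠ 0 := by
  intro h
  have : (2 : Fin (m+3)).val = (0 : Fin (m+3)).val := congrArg Fin.val h
  simp only [show (2 : Fin (m+3)).val = 2 from rfl, show (0 : Fin (m+3)).val = 0 from rfl] at this
  omega

lemma fin_one_ne_zero (m : ℕ) : (1 : Fin (m+3)) ≠ 0 := by
  intro h
  have : (1 : Fin (m+3)).val = (0 : Fin (m+3)).val := congrArg Fin.val h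
  simp only [show (1 : Fin (m+3)).val = 1 from rfl, show (0 : Fin (m+3)).val = 0 from rfl] at this
  omega

lemma succ_ne_self' {m : ℕ} (v : Fin (m+3)) : v + 1 ≠ v := by
  intro h
  have : (1 : Fin (m+3)) = 0 := by
    have := congrArg (· - v) h
    simpa [add_comm, add_sub_cancel_right, sub_self] using this
  exact fin_one_ne_zero m this

lemma adj_succ {m : ℕ} (v : Fin (m+3)) :
    (SimpleGraph.cycleGraph (m+3)).Adj v (v+1) := by
  rw [SimpleGraph.cycleGraph_adj']
  right
  rw [add_sub_cancel_left]
  rfl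

lemma e_inj {m : ℕ} : Function.Injective (fun v : Fin (m+3) => s(v, v+1)) := by
  intro v w h
  simp only [Sym2.eq, Sym2.rel_iff', Prod.mk.injEq, Prod.swap_prod_mk] at h
  rcases h with ⟨h1, _⟩ | ⟨h1, h2⟩
  · exact h1
  · exfalso
    rw [← h2] at h1
    have h3 : v = v + 2 := by
      calc v = v + 1 + 1 := h1
        _ = v + 2 := by abel
    have h4 : (0 : Fin (m+3)) = 2 := by
      have := congrArg (· - v) h3
      simpa [add_comm, sub_self] using this
    exact fin_two_ne_zero m h4.symm

lemma edge_form {m : ℕ} (x : Sym2 (Fin (m+3)))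
    (hx : x ∈ (SimpleGraph.cycleGraph (m+3)).edgeSet) : ∃ v, x = s(v, v+1) := by
  induction x using Sym2.ind with
  | _ a b =>
    rw [SimpleGraph.mem_edgeSet, SimpleGraph.cycleGraph_adj'] at hx
    have h1 : (1 : Fin (m+3)).val = 1 := rfl
    rcases hx with h | h
    · refine ⟨b, ?_⟩
      have : a - b = 1 := Fin.ext (by rw [h1]; exact h)
      rw [sub_eq_iff_eq_add] at this
      rw [this, add_comm 1 b]
      exact Sym2.eq_swap
    · refine ⟨a, ?_⟩
      have : b - a = 1 := Fin.ext (by rw [h1]; exact h)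
      rw [sub_eq_iff_eq_add] at this
      rw [this, add_comm 1 a, Sym2.eq_swap]

lemma hosoya_cycle (m : ℕ) : hosoya (SimpleGraph.cycleGraph (m+3)) = (cSetsF m).card := by
  classical
  rw [hosoya]
  have hfin : {s : Finset (Sym2 (Fin (m+3))) |
      (↑s : Set (Sym2 (Fin (m+3)))) ⊆ (SimpleGraph.cycleGraph (m+3)).edgeSet ∧
      (↑s : Set (Sym2 (Fin (m+3)))).Pairwise
        (fun e f => ∀ v : Fin (m+3), ¬(v ∈ e ∧ v ∈ f))}.Finite := Set.toFinite _
  rw [Set.ncard_eq_toFinset_card _ hfin]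
  apply Finset.card_nbij'
    (fun a => Finset.univ.filter (fun v : Fin (m+3) => s(v, v+1) ∈ a))
    (fun t => t.image (fun v => s(v, v+1)))
  · intro a ha
    rw [Finset.mem_coe, Set.Finite.mem_toFinset, Set.mem_setOf_eq] at ha
    obtain ⟨hsub, hp⟩ := ha
    rw [Finset.mem_coe, mem_cSetsF]
    intro v hv hv1
    simp only [Finset.mem_filter, Finset.mem_univ, true_and] at hv hv1
    have hne : s(v, v+1) ≠ s(v+1, v+1+1) := fun h => succ_ne_self' v (e_inj h).symm
    exact hp (Finset.mem_coe.mpr hv) (Finset.mem_coe.mpr hv1) hne (v+1)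
      ⟨Sym2.mem_mk_right v (v+1), Sym2.mem_mk_left (v+1) (v+1+1)⟩
  · intro t ht
    rw [Finset.mem_coe, mem_cSetsF] at ht
    rw [Finset.mem_coe, Set.Finite.mem_toFinset, Set.mem_setOf_eq]
    constructor
    · intro x hx
      rw [Finset.mem_coe, Finset.mem_image] at hx
      obtain ⟨v, _, rfl⟩ := hx
      exact ((SimpleGraph.cycleGraph (m+3)).mem_edgeSet).mpr (adj_succ v)
    · intro x hx y hy hxy u hu
      rw [Finset.mem_coe, Finset.mem_image] at hx hy
      obtain ⟨v, hv, rfl⟩ := hx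
      obtain ⟨w, hw, rfl⟩ := hy
      obtain ⟨hu1, hu2⟩ := hu
      rw [Sym2.mem_iff] at hu1 hu2
      rcases hu1 with rfl | rfl
      · rcases hu2 with rfl | h
        · exact hxy rfl
        · exact ht w hw (h ▸ hv)
      · rcases hu2 with h | h
        · exact ht v hv (h ▸ hw)
        · have hvw : v = w := add_right_cancel h
          subst hvw
          exact hxy rfl
  · intro a ha
    rw [Finset.mem_coe, Set.Finite.mem_toFinset, Set.mem_setOf_eq] at ha
    ext x
    simp only [Finset.mem_image, Finset.mem_filter, Finset.mem_univ, true_and]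
    constructor
    · rintro ⟨v, hv, rfl⟩
      exact hv
    · intro hx
      obtain ⟨v, rfl⟩ := edge_form x (ha.1 (Finset.mem_coe.mpr hx))
      exact ⟨v, hx, rfl⟩
  · intro t ht
    ext v
    simp only [Finset.mem_filter, Finset.mem_univ, true_and, Finset.mem_image]
    constructor
    · rintro ⟨w, hw, hvw⟩
      rwa [← e_inj hvw]
    · intro hv
      exact ⟨v, hv, rfl⟩

theorem hosoya_cycleGraph (n : ℕ) (hn : 3 ≤ n) (L : ℕ → ℕ)
    (hL0 : L 0 = 2) (hL1 : L 1 = 1)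
    (hLrec : ∀ k, L (k + 2) = L (k + 1) + L k) :
    hosoya (SimpleGraph.cycleGraph n) = L n := by
  obtain ⟨m, rfl⟩ : ∃ m, n = m + 3 := ⟨n - 3, by omega⟩
  rw [hosoya_cycle m, cSetsF_card m, cSets_card m, ← lucas_eq L hL0 hL1 hLrec m]
end

section
/- For the caterpillar graph C_n(a_0, a_1, …, a_{n-1}) with positive integers a_i, the Hosoya index equals p_{n-1}, the numerator of the simple continued fraction [a_0; a_1, …, a_{n-1}] in lowest terms, where p_k = a_k p_{k-1} + p_{k-2}, p_{-1} = 1, p_{-2} = 0. -/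
/-- The caterpillar graph `C n (x 0, …, x (n-1))`: a central path of vertices
`⟨i, 0⟩`, where the spine vertex `⟨i, 0⟩` carries `x i - 1` pendant leaves
`⟨i, j⟩`, `j ≠ 0`. -/
def caterpillar (n : ℕ) (x : Fin n → ℕ) :
    SimpleGraph ((i : Fin n) × Fin (x i)) :=
  SimpleGraph.fromRel (fun a b =>
    ((a.2 : ℕ) = 0 ∧ (b.2 : ℕ) = 0 ∧ (b.1 : ℕ) = (a.1 : ℕ) + 1) ∨
    (a.1 = b.1 ∧ (a.2 : ℕ) = 0 ∧ (b.2 : ℕ) ≠ 0))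

namespace CatPf

variable {n : ℕ}

def Valid (a : Fin n → ℕ) (g : ∀ i : Fin n, Fin (a i + 1)) : Prop :=
  ∀ (k : ℕ) (hk : k < n), (g ⟨k, hk⟩ : ℕ) = a ⟨k, hk⟩ →
    ∃ h : k + 1 < n, (g ⟨k + 1, h⟩ : ℕ) = 0

def PCond (a : Fin n → ℕ) (g : ∀ i : Fin n, Fin (a i + 1)) : Prop :=
  ∀ (k : ℕ) (hk : k + 1 < n),
    (g ⟨k, Nat.lt_of_succ_lt hk⟩ : ℕ) = a ⟨k, Nat.lt_of_succ_lt hk⟩ →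
    (g ⟨k + 1, hk⟩ : ℕ) = 0

def Dang (a : Fin n → ℕ) (g : ∀ i : Fin n, Fin (a i + 1)) : Prop :=
  ∃ hn : 0 < n, (g ⟨n - 1, by omega⟩ : ℕ) = a ⟨n - 1, by omega⟩

noncomputable def Acard (n : ℕ) (a : Fin n → ℕ) : ℕ :=
  Nat.card {g : ∀ i : Fin n, Fin (a i + 1) // Valid a g}

noncomputable def Bcard (n : ℕ) (a : Fin n → ℕ) : ℕ :=
  Nat.card {g : ∀ i : Fin n, Fin (a i + 1) // PCond a g ∧ Dang a g}

lemma valid_iff (a : Fin n → ℕ) (g : ∀ i : Fin n, Fin (a i + 1)) :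
    Valid a g ↔ PCond a g ∧ ¬ Dang a g := by
  constructor
  · intro h
    refine ⟨fun k hk hg => ?_, fun ⟨hn, hd⟩ => ?_⟩
    · obtain ⟨h2, h3⟩ := h k (Nat.lt_of_succ_lt hk) hg
      exact h3
    · obtain ⟨h2, -⟩ := h (n-1) (by omega) hd
      omega
  · rintro ⟨hP, hD⟩ k hk hg
    by_cases hk1 : k + 1 < n
    · exact ⟨hk1, hP k hk1 hg⟩
    · exfalso
      apply hD
      have hk2 : n - 1 = k := by omega
      subst hk2
      exact ⟨by omega, hg⟩

section Snoc

variable {b : Fin (n+1) → ℕ} (g' : ∀ i : Fin n, Fin (b i.castSucc + 1))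
  (v : Fin (b (Fin.last n) + 1))

lemma snoc_val_lt {k : ℕ} (hk : k < n) (hk' : k < n + 1) :
    ((Fin.snoc g' v : ∀ i : Fin (n+1), Fin (b i + 1)) ⟨k, hk'⟩ : ℕ) = (g' ⟨k, hk⟩ : ℕ) := by
  have h : (⟨k, hk'⟩ : Fin (n+1)) = Fin.castSucc ⟨k, hk⟩ := rfl
  rw [h, Fin.snoc_castSucc]

lemma snoc_val_last (hk' : n < n + 1) :
    ((Fin.snoc g' v : ∀ i : Fin (n+1), Fin (b i + 1)) ⟨n, hk'⟩ : ℕ) = (v : ℕ) := by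
  have h : (⟨n, hk'⟩ : Fin (n+1)) = Fin.last n := rfl
  rw [h, Fin.snoc_last]

lemma pcond_snoc_iff :
    PCond b (Fin.snoc g' v) ↔
      PCond (fun i => b i.castSucc) g' ∧ (Dang (fun i => b i.castSucc) g' → (v : ℕ) = 0) := by
  constructor
  · intro h
    constructor
    · intro k hk hg
      have h2 := h k (by omega)
      rw [snoc_val_lt g' v (by omega), snoc_val_lt g' v (by omega)] at h2
      exact h2 hg
    · rintro ⟨hn, hd⟩
      have h2 := h (n-1) (by omega)
      rw [snoc_val_lt g' v (by omega)] at h2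
      have h4 := h2 hd
      have h3 : (⟨n-1+1, by omega⟩ : Fin (n+1)) = ⟨n, by omega⟩ :=
        Fin.ext (show n-1+1 = n by omega)
      rw [h3, snoc_val_last] at h4
      exact h4
  · rintro ⟨hP, hD⟩ k hk hg
    rw [snoc_val_lt g' v (by omega)] at hg
    by_cases hk1 : k + 1 < n
    · rw [snoc_val_lt g' v hk1]
      exact hP k hk1 hg
    · have h3 : (⟨k+1, hk⟩ : Fin (n+1)) = ⟨n, by omega⟩ :=
        Fin.ext (show k+1 = n by omega)
      rw [h3, snoc_val_last]
      apply hD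
      have hk2 : n - 1 = k := by omega
      subst hk2
      exact ⟨by omega, hg⟩

lemma dang_snoc_iff :
    Dang b (Fin.snoc g' v) ↔ (v : ℕ) = b (Fin.last n) := by
  constructor
  · rintro ⟨hn, hd⟩
    have h2 : ((Fin.snoc g' v : ∀ i : Fin (n+1), Fin (b i + 1)) ⟨n, by omega⟩ : ℕ)
        = b (Fin.last n) := hd
    rwa [snoc_val_last] at h2
  · intro hd
    refine ⟨by omega, ?_⟩
    show ((Fin.snoc g' v : ∀ i : Fin (n+1), Fin (b i + 1)) ⟨n, by omega⟩ : ℕ) = b (Fin.last n)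
    rwa [snoc_val_last]

lemma valid_snoc_iff :
    Valid b (Fin.snoc g' v) ↔
      ((v : ℕ) < b (Fin.last n) ∧ PCond (fun i => b i.castSucc) g'
        ∧ (Dang (fun i => b i.castSucc) g' → (v : ℕ) = 0)) := by
  rw [valid_iff, pcond_snoc_iff, dang_snoc_iff]
  have hv : (v : ℕ) ≤ b (Fin.last n) := by omega
  constructor
  · rintro ⟨⟨h1, h2⟩, h3⟩
    exact ⟨by omega, h1, h2⟩
  · rintro ⟨h1, h2, h3⟩
    exact ⟨⟨h2, h3⟩, by omega⟩

end Snoc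

open Classical in
noncomputable def equivA (b : Fin (n+1) → ℕ) (hb : ∀ i, 0 < b i) :
    {g : ∀ i : Fin (n+1), Fin (b i + 1) // Valid b g} ≃
      ({g' : ∀ i : Fin n, Fin (b i.castSucc + 1) // Valid (fun i => b i.castSucc) g'}
          × Fin (b (Fin.last n)))
        ⊕ {g' : ∀ i : Fin n, Fin (b i.castSucc + 1) //
            PCond (fun i => b i.castSucc) g' ∧ Dang (fun i => b i.castSucc) g'} where
  toFun g :=
    if h : Dang (fun i => b i.castSucc) (Fin.init g.1) then
      .inr ⟨Fin.init g.1, by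
        have hg := g.2
        rw [← Fin.snoc_init_self g.1, valid_snoc_iff] at hg
        exact ⟨hg.2.1, h⟩⟩
    else
      .inl ⟨⟨Fin.init g.1, by
        have hg := g.2
        rw [← Fin.snoc_init_self g.1, valid_snoc_iff] at hg
        rw [valid_iff]
        exact ⟨hg.2.1, h⟩⟩,
        ⟨(g.1 (Fin.last n) : ℕ), by
          have hg := g.2
          rw [← Fin.snoc_init_self g.1, valid_snoc_iff] at hg
          exact hg.1⟩⟩
  invFun x :=
    match x with
    | .inl ⟨⟨g', hg'⟩, v⟩ =>
      ⟨Fin.snoc g' ⟨(v : ℕ), by omega⟩, by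
        rw [valid_snoc_iff]
        rw [valid_iff] at hg'
        exact ⟨v.2, hg'.1, fun hd => absurd hd hg'.2⟩⟩
    | .inr ⟨g', hg'⟩ =>
      ⟨Fin.snoc g' ⟨0, by omega⟩, by
        rw [valid_snoc_iff]
        exact ⟨by simpa using hb (Fin.last n), hg'.1, fun _ => rfl⟩⟩
  left_inv g := by
    rcases g with ⟨g, hg⟩
    by_cases h : Dang (fun i => b i.castSucc) (Fin.init g)
    · simp only [h, dif_pos]
      apply Subtype.ext
      have hg' := hg
      rw [← Fin.snoc_init_self g, valid_snoc_iff] at hg'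
      have h0 : (g (Fin.last n) : ℕ) = 0 := hg'.2.2 h
      show Fin.snoc (Fin.init g) ⟨0, by omega⟩ = g
      rw [show (⟨0, by omega⟩ : Fin (b (Fin.last n) + 1)) = g (Fin.last n) from
        Fin.ext (show (0:ℕ) = (g (Fin.last n) : ℕ) by omega), Fin.snoc_init_self]
    · simp only [h, dif_neg, not_false_iff]
      apply Subtype.ext
      show Fin.snoc (Fin.init g) ⟨(g (Fin.last n) : ℕ), by omega⟩ = g
      rw [show (⟨(g (Fin.last n) : ℕ), by omega⟩ : Fin (b (Fin.last n) + 1)) = g (Fin.last n)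
        from Fin.ext rfl, Fin.snoc_init_self]
  right_inv x := by
    rcases x with ⟨⟨g', hg'⟩, v⟩ | ⟨g', hg'⟩
    · have hnd : ¬ Dang (fun i => b i.castSucc) g' := ((valid_iff _ _).1 hg').2
      have hi : Fin.init (Fin.snoc (α := fun i => Fin (b i + 1)) g'
            (⟨(v : ℕ), by omega⟩ : Fin (b (Fin.last n) + 1)))
          = g' := Fin.init_snoc (α := fun i => Fin (b i + 1)) _ g'
      simp only [hi, hnd, dif_neg, not_false_iff]
      congr 1
      apply Prod.ext
      · exact Subtype.ext rfl
      · apply Fin.ext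
        show ((Fin.snoc g' (⟨(v : ℕ), by omega⟩ : Fin (b (Fin.last n) + 1))
          : ∀ i : Fin (n+1), Fin (b i + 1)) (Fin.last n) : ℕ) = (v : ℕ)
        rw [Fin.snoc_last]
    · have hi : Fin.init (Fin.snoc (α := fun i => Fin (b i + 1)) g'
            (⟨0, by omega⟩ : Fin (b (Fin.last n) + 1)))
          = g' := Fin.init_snoc (α := fun i => Fin (b i + 1)) _ g'
      simp only [hi, hg'.2, dif_pos]



variable {n : ℕ}

noncomputable def equivB (b : Fin (n+1) → ℕ) (hb : ∀ i, 0 < b i) :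
    {g : ∀ i : Fin (n+1), Fin (b i + 1) // PCond b g ∧ Dang b g} ≃
      {g' : ∀ i : Fin n, Fin (b i.castSucc + 1) // Valid (fun i => b i.castSucc) g'} where
  toFun g := ⟨Fin.init g.1, by
    have hg := g.2
    rw [← Fin.snoc_init_self g.1, pcond_snoc_iff, dang_snoc_iff] at hg
    rw [valid_iff]
    refine ⟨hg.1.1, fun hd => ?_⟩
    have h1 := hg.1.2 hd
    have h2 := hg.2
    have h3 := hb (Fin.last n)
    omega⟩
  invFun g' := ⟨Fin.snoc g'.1 ⟨b (Fin.last n), Nat.lt_succ_self _⟩, by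
    rw [pcond_snoc_iff, dang_snoc_iff]
    have hg := g'.2
    rw [valid_iff] at hg
    exact ⟨⟨hg.1, fun hd => absurd hd hg.2⟩, rfl⟩⟩
  left_inv g := by
    rcases g with ⟨g, hg⟩
    apply Subtype.ext
    show Fin.snoc (Fin.init g) ⟨b (Fin.last n), Nat.lt_succ_self _⟩ = g
    have hd : (g (Fin.last n) : ℕ) = b (Fin.last n) := hg.2.2
    rw [show (⟨b (Fin.last n), Nat.lt_succ_self _⟩ : Fin (b (Fin.last n) + 1)) = g (Fin.last n)
      from Fin.ext (show b (Fin.last n) = (g (Fin.last n) : ℕ) by omega), Fin.snoc_init_self]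
  right_inv g' := by
    apply Subtype.ext
    exact Fin.init_snoc (α := fun i => Fin (b i + 1)) _ g'.1

lemma Acard_zero (a : Fin 0 → ℕ) : Acard 0 a = 1 := by
  have h : Unique {g : ∀ i : Fin 0, Fin (a i + 1) // Valid a g} :=
    { default := ⟨fun i => i.elim0, fun k hk => absurd hk (by omega)⟩
      uniq := fun x => Subtype.ext (funext fun i => i.elim0) }
  exact Nat.card_unique

lemma Bcard_zero (a : Fin 0 → ℕ) : Bcard 0 a = 0 := by
  have h : IsEmpty {g : ∀ i : Fin 0, Fin (a i + 1) // PCond a g ∧ Dang a g} :=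
    ⟨fun x => by obtain ⟨h0, -⟩ := x.2.2; omega⟩
  exact Nat.card_of_isEmpty

lemma Acard_succ (b : Fin (n+1) → ℕ) (hb : ∀ i, 0 < b i) :
    Acard (n+1) b = b (Fin.last n) * Acard n (fun i => b i.castSucc)
      + Bcard n (fun i => b i.castSucc) := by
  have h1 : Acard (n+1) b = Nat.card
      (({g' : ∀ i : Fin n, Fin (b i.castSucc + 1) // Valid (fun i => b i.castSucc) g'}
          × Fin (b (Fin.last n)))
        ⊕ {g' : ∀ i : Fin n, Fin (b i.castSucc + 1) //
            PCond (fun i => b i.castSucc) g' ∧ Dang (fun i => b i.castSucc) g'}) :=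
    Nat.card_congr (equivA b hb)
  rw [h1, Nat.card_sum, Nat.card_prod]
  have h2 : Nat.card (Fin (b (Fin.last n))) = b (Fin.last n) := by simp
  rw [h2, mul_comm]
  rfl

lemma Bcard_succ (b : Fin (n+1) → ℕ) (hb : ∀ i, 0 < b i) :
    Bcard (n+1) b = Acard n (fun i => b i.castSucc) := by
  have h1 : Bcard (n+1) b = Nat.card
      {g' : ∀ i : Fin n, Fin (b i.castSucc + 1) // Valid (fun i => b i.castSucc) g'} :=
    Nat.card_congr (equivB b hb)
  rw [h1]
  rfl



lemma Acard_eq (n : ℕ) (a : Fin n → ℕ) (ha : ∀ i, 0 < a i) (p : ℕ → ℕ)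
    (hp0 : p 0 = 0) (hp1 : p 1 = 1)
    (hprec : ∀ k (hk : k < n), p (k + 2) = a ⟨k, hk⟩ * p (k + 1) + p k) :
    Acard n a = p (n + 1) := by
  suffices h : ∀ m (hm : m ≤ n), Acard m (fun i => a (Fin.castLE hm i)) = p (m+1)
      ∧ Bcard m (fun i => a (Fin.castLE hm i)) = p m by
    have h2 := (h n le_rfl).1
    rwa [show (fun i => a (Fin.castLE le_rfl i)) = a from
      funext fun i => congrArg a (Fin.ext rfl)] at h2
  intro m
  induction m with
  | zero => intro hm; rw [Acard_zero, Bcard_zero, hp0, hp1]; exact ⟨rfl, rfl⟩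
  | succ m ih =>
    intro hm
    have hm' : m ≤ n := by omega
    obtain ⟨hA, hB⟩ := ih hm'
    set b : Fin (m+1) → ℕ := fun i => a (Fin.castLE hm i) with hbdef
    have hb : ∀ i, 0 < b i := fun i => ha _
    have hcast : (fun i : Fin m => b i.castSucc) = (fun i => a (Fin.castLE hm' i)) :=
      funext fun i => congrArg a (Fin.ext rfl)
    have hlast : b (Fin.last m) = a ⟨m, hm⟩ := congrArg a (Fin.ext rfl)
    constructor
    · rw [Acard_succ b hb, hcast, hA, hB, hlast, hprec m hm]
    · rw [Bcard_succ b hb, hcast, hA]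



variable {n : ℕ} {a : Fin n → ℕ}

abbrev VV (a : Fin n → ℕ) := (i : Fin n) × Fin (a i)

lemma VV_ext_iff {p q : VV a} : p = q ↔ ((p.1 : ℕ) = (q.1 : ℕ) ∧ (p.2 : ℕ) = (q.2 : ℕ)) := by
  constructor
  · rintro rfl; exact ⟨rfl, rfl⟩
  · rintro ⟨h1, h2⟩
    rcases p with ⟨i, x⟩; rcases q with ⟨j, y⟩
    simp only at h1 h2
    have hij : i = j := Fin.ext h1
    subst hij
    exact congrArg _ (Fin.ext h2)

def sv (ha : ∀ i, 0 < a i) (i : Fin n) : VV a := ⟨i, ⟨0, ha i⟩⟩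

def spine (ha : ∀ i, 0 < a i) (i : Fin n) (h : (i : ℕ) + 1 < n) : Sym2 (VV a) :=
  s(sv ha i, sv ha ⟨(i : ℕ) + 1, h⟩)

def pend (ha : ∀ i, 0 < a i) (i : Fin n) (j : Fin (a i)) : Sym2 (VV a) :=
  s(sv ha i, ⟨i, j⟩)

variable {ha : ∀ i, 0 < a i}

lemma edge_shape {e : Sym2 (VV a)} (he : e ∈ (caterpillar n a).edgeSet) :
    (∃ i h, e = spine ha i h) ∨ ∃ i, ∃ j : Fin (a i), (j : ℕ) ≠ 0 ∧ e = pend ha i j := by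
  induction e with
  | _ x y =>
    rw [SimpleGraph.mem_edgeSet, caterpillar, SimpleGraph.fromRel_adj] at he
    obtain ⟨hne, h | h⟩ := he
    · rcases h with ⟨h1, h2, h3⟩ | ⟨h1, h2, h3⟩
      · left
        have hb : (x.1 : ℕ) + 1 < n := h3 ▸ y.1.2
        refine ⟨x.1, hb, ?_⟩
        have hx : x = sv ha x.1 := VV_ext_iff.2 ⟨rfl, h1⟩
        have hy : y = sv ha ⟨(x.1 : ℕ) + 1, hb⟩ := VV_ext_iff.2 ⟨h3, h2⟩
        rw [spine, ← hx, ← hy]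
      · right
        have hj : ((y.2 : ℕ)) < a x.1 := by rw [h1]; exact y.2.2
        refine ⟨x.1, ⟨(y.2 : ℕ), hj⟩, h3, ?_⟩
        have hx : x = sv ha x.1 := VV_ext_iff.2 ⟨rfl, h2⟩
        have hy : y = ⟨x.1, ⟨(y.2 : ℕ), hj⟩⟩ := VV_ext_iff.2 ⟨h1.symm ▸ rfl, rfl⟩
        rw [pend, ← hx, ← hy]
    · rcases h with ⟨h1, h2, h3⟩ | ⟨h1, h2, h3⟩
      · left
        have hb : (y.1 : ℕ) + 1 < n := h3 ▸ x.1.2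
        refine ⟨y.1, hb, ?_⟩
        have hy : y = sv ha y.1 := VV_ext_iff.2 ⟨rfl, h1⟩
        have hx : x = sv ha ⟨(y.1 : ℕ) + 1, hb⟩ := VV_ext_iff.2 ⟨h3, h2⟩
        rw [spine, ← hx, ← hy, Sym2.eq_swap]
      · right
        have hj : ((x.2 : ℕ)) < a y.1 := by rw [h1]; exact x.2.2
        refine ⟨y.1, ⟨(x.2 : ℕ), hj⟩, h3, ?_⟩
        have hy : y = sv ha y.1 := VV_ext_iff.2 ⟨rfl, h2⟩
        have hx : x = ⟨y.1, ⟨(x.2 : ℕ), hj⟩⟩ := VV_ext_iff.2 ⟨h1.symm ▸ rfl, rfl⟩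
        rw [pend, ← hx, ← hy, Sym2.eq_swap]


lemma sv_fst (i : Fin n) : ((sv ha i).1 : ℕ) = (i : ℕ) := rfl
lemma sv_snd (i : Fin n) : ((sv ha i).2 : ℕ) = 0 := rfl

lemma spine_inj {i i' : Fin n} {h : (i:ℕ)+1 < n} {h' : (i':ℕ)+1 < n}
    (he : spine ha i h = spine ha i' h') : (i : ℕ) = (i' : ℕ) := by
  rw [spine, spine, Sym2.eq_iff] at he
  rcases he with ⟨h1, h2⟩ | ⟨h1, h2⟩
  · exact (VV_ext_iff.1 h1).1
  · have e1 := (VV_ext_iff.1 h1).1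
    have e2 := (VV_ext_iff.1 h2).1
    simp only [sv_fst] at e1 e2
    omega

lemma spine_congr {i i' : Fin n} {h : (i:ℕ)+1 < n} {h' : (i':ℕ)+1 < n}
    (hii : (i : ℕ) = (i' : ℕ)) : spine ha i h = spine ha i' h' := by
  have : i = i' := Fin.ext hii
  subst this
  rfl

lemma pend_ne_spine {i i' : Fin n} {j : Fin (a i)} (hj : (j:ℕ) ≠ 0) {h' : (i':ℕ)+1 < n} :
    pend ha i j ≠ spine ha i' h' := by
  intro he
  rw [pend, spine, Sym2.eq_iff] at he
  rcases he with ⟨h1, h2⟩ | ⟨h1, h2⟩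
  · have e2 := (VV_ext_iff.1 h2).2
    simp only [sv_snd] at e2
    exact hj e2
  · have e2 := (VV_ext_iff.1 h2).2
    simp only [sv_snd] at e2
    exact hj e2

lemma pend_inj {i i' : Fin n} {j : Fin (a i)} {j' : Fin (a i')}
    (hj : (j:ℕ) ≠ 0) (he : pend ha i j = pend ha i' j') :
    (i : ℕ) = (i' : ℕ) ∧ (j : ℕ) = (j' : ℕ) := by
  rw [pend, pend, Sym2.eq_iff] at he
  rcases he with ⟨h1, h2⟩ | ⟨h1, h2⟩
  · exact ⟨(VV_ext_iff.1 h1).1, (VV_ext_iff.1 h2).2⟩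
  · have e1 := (VV_ext_iff.1 h1).2
    simp only [sv_snd] at e1
    have e2 := (VV_ext_iff.1 h2).2
    simp only [sv_snd] at e2
    omega

lemma pend_congr {i i' : Fin n} {j : Fin (a i)} {j' : Fin (a i')}
    (hii : (i : ℕ) = (i' : ℕ)) (hjj : (j : ℕ) = (j' : ℕ)) : pend ha i j = pend ha i' j' := by
  have : i = i' := Fin.ext hii
  subst this
  have : j = j' := Fin.ext hjj
  subst this
  rfl

lemma spine_mem_edgeSet (i : Fin n) (h : (i:ℕ)+1 < n) :
    spine ha i h ∈ (caterpillar n a).edgeSet := by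
  rw [spine, SimpleGraph.mem_edgeSet, caterpillar, SimpleGraph.fromRel_adj]
  constructor
  · intro hc
    have := (VV_ext_iff.1 hc).1
    simp only [sv_fst] at this
    omega
  · exact Or.inl (Or.inl ⟨rfl, rfl, rfl⟩)

lemma pend_mem_edgeSet (i : Fin n) (j : Fin (a i)) (hj : (j:ℕ) ≠ 0) :
    pend ha i j ∈ (caterpillar n a).edgeSet := by
  rw [pend, SimpleGraph.mem_edgeSet, caterpillar, SimpleGraph.fromRel_adj]
  constructor
  · intro hc
    have := (VV_ext_iff.1 hc).2
    simp only [sv_snd] at this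
    exact hj this.symm
  · exact Or.inl (Or.inr ⟨rfl, rfl, hj⟩)

lemma mem_spine {v : VV a} {i : Fin n} {h : (i:ℕ)+1 < n} :
    v ∈ spine ha i h ↔ v = sv ha i ∨ v = sv ha ⟨(i:ℕ)+1, h⟩ := Sym2.mem_iff

lemma mem_pend {v : VV a} {i : Fin n} {j : Fin (a i)} :
    v ∈ pend ha i j ↔ v = sv ha i ∨ v = ⟨i, j⟩ := Sym2.mem_iff




variable {n : ℕ} {a : Fin n → ℕ} {ha : ∀ i, 0 < a i}

def edgeOf (ha : ∀ i, 0 < a i) (i : Fin n) (c : Fin (a i + 1)) :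
    Finset (Sym2 (VV a)) :=
  if h0 : (c : ℕ) = 0 then ∅
  else if hs : (c : ℕ) = a i then
    (if h : (i : ℕ) + 1 < n then {spine ha i h} else ∅)
  else {pend ha i ⟨(c : ℕ), lt_of_le_of_ne (Nat.lt_succ_iff.1 c.2) hs⟩}

def encode (ha : ∀ i, 0 < a i) (g : ∀ i : Fin n, Fin (a i + 1)) : Finset (Sym2 (VV a)) :=
  Finset.univ.biUnion fun i => edgeOf ha i (g i)

lemma mem_edgeOf {e : Sym2 (VV a)} {i : Fin n} {c : Fin (a i + 1)} :
    e ∈ edgeOf ha i c ↔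
      ((∃ h : (i : ℕ) + 1 < n, (c : ℕ) = a i ∧ e = spine ha i h) ∨
       (∃ j : Fin (a i), (j : ℕ) = (c : ℕ) ∧ (j : ℕ) ≠ 0 ∧ e = pend ha i j)) := by
  have hc2 : (c : ℕ) < a i + 1 := c.2
  have hai := ha i
  unfold edgeOf
  split_ifs with h0 hs h
  · simp only [Finset.notMem_empty, false_iff]
    rintro (⟨h, hca, -⟩ | ⟨j, hj1, hj2, -⟩) <;> omega
  · simp only [Finset.mem_singleton]
    constructor
    · intro he; exact Or.inl ⟨h, hs, he⟩
    · rintro (⟨h', hca, he⟩ | ⟨j, hj1, hj2, he⟩)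
      · exact he.trans (spine_congr rfl)
      · exfalso; have := j.2; omega
  · simp only [Finset.notMem_empty, false_iff]
    rintro (⟨h', hca, -⟩ | ⟨j, hj1, hj2, -⟩)
    · exact h h'
    · have := j.2; omega
  · simp only [Finset.mem_singleton]
    constructor
    · intro he
      exact Or.inr ⟨⟨(c : ℕ), lt_of_le_of_ne (Nat.lt_succ_iff.1 c.2) hs⟩, rfl, h0, he⟩
    · rintro (⟨h', hca, he⟩ | ⟨j, hj1, hj2, he⟩)
      · exact absurd hca hs
      · exact he.trans (pend_congr rfl hj1)

lemma ne_zero_of_mem_edgeOf {e : Sym2 (VV a)} {i : Fin n} {c : Fin (a i + 1)}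
    (he : e ∈ edgeOf ha i c) : (c : ℕ) ≠ 0 := by
  have hai := ha i
  rcases mem_edgeOf.1 he with ⟨h, hca, -⟩ | ⟨j, hj1, hj2, -⟩ <;> omega

lemma edgeOf_subsingleton {e f : Sym2 (VV a)} {i : Fin n} {c : Fin (a i + 1)}
    (he : e ∈ edgeOf ha i c) (hf : f ∈ edgeOf ha i c) : e = f := by
  rcases mem_edgeOf.1 he with ⟨h, hca, he'⟩ | ⟨j, hj1, hj2, he'⟩ <;>
    rcases mem_edgeOf.1 hf with ⟨h', hca', hf'⟩ | ⟨j', hj1', hj2', hf'⟩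
  · exact he'.trans ((spine_congr rfl).trans hf'.symm)
  · exfalso; have := j'.2; omega
  · exfalso; have := j.2; omega
  · exact he'.trans ((pend_congr rfl (by omega)).trans hf'.symm)

lemma owner_unique {e : Sym2 (VV a)} {i i' : Fin n} {c : Fin (a i + 1)} {c' : Fin (a i' + 1)}
    (he : e ∈ edgeOf ha i c) (he' : e ∈ edgeOf ha i' c') :
    (i : ℕ) = (i' : ℕ) ∧ (c : ℕ) = (c' : ℕ) := by
  rcases mem_edgeOf.1 he with ⟨h, hca, rfl⟩ | ⟨j, hj1, hj2, rfl⟩ <;>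
    rcases mem_edgeOf.1 he' with ⟨h', hca', hf'⟩ | ⟨j', hj1', hj2', hf'⟩
  · have hii := spine_inj hf'
    have : i = i' := Fin.ext hii
    subst this
    exact ⟨rfl, by omega⟩
  · exact absurd hf'.symm (pend_ne_spine hj2')
  · exact absurd hf' (pend_ne_spine hj2)
  · obtain ⟨hii, hjj⟩ := pend_inj hj2 hf'
    exact ⟨hii, by omega⟩

lemma vertex_of_mem_edgeOf {v : VV a} {e : Sym2 (VV a)} {i : Fin n} {c : Fin (a i + 1)}
    (hv : v ∈ e) (he : e ∈ edgeOf ha i c) :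
    (v.1 : ℕ) = (i : ℕ) ∨ ((v.1 : ℕ) = (i : ℕ) + 1 ∧ (c : ℕ) = a i) := by
  rcases mem_edgeOf.1 he with ⟨h, hca, rfl⟩ | ⟨j, hj1, hj2, rfl⟩
  · rcases mem_spine.1 hv with rfl | rfl
    · exact Or.inl rfl
    · exact Or.inr ⟨rfl, hca⟩
  · rcases mem_pend.1 hv with rfl | rfl
    · exact Or.inl rfl
    · exact Or.inl rfl

lemma mem_encode {e : Sym2 (VV a)} {g : ∀ i : Fin n, Fin (a i + 1)} :
    e ∈ encode ha g ↔ ∃ i, e ∈ edgeOf ha i (g i) := by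
  simp [encode, Finset.mem_biUnion]

lemma encode_matching {g : ∀ i : Fin n, Fin (a i + 1)} (hg : Valid a g) :
    (↑(encode ha g) : Set (Sym2 (VV a))) ⊆ (caterpillar n a).edgeSet ∧
    (↑(encode ha g) : Set (Sym2 (VV a))).Pairwise
      (fun e f => ∀ v : VV a, ¬(v ∈ e ∧ v ∈ f)) := by
  constructor
  · intro e he
    rw [Finset.mem_coe, mem_encode] at he
    obtain ⟨i, he⟩ := he
    rcases mem_edgeOf.1 he with ⟨h, hca, rfl⟩ | ⟨j, hj1, hj2, rfl⟩
    · exact spine_mem_edgeSet i h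
    · exact pend_mem_edgeSet i j hj2
  · intro e he f hf hne v ⟨hve, hvf⟩
    rw [Finset.mem_coe, mem_encode] at he hf
    obtain ⟨i, he⟩ := he
    obtain ⟨i', hf⟩ := hf
    by_cases hii : (i : ℕ) = (i' : ℕ)
    · have : i = i' := Fin.ext hii
      subst this
      exact hne (edgeOf_subsingleton he hf)
    · rcases vertex_of_mem_edgeOf hve he with h1 | ⟨h1, hc1⟩ <;>
        rcases vertex_of_mem_edgeOf hvf hf with h2 | ⟨h2, hc2⟩
      · exact hii (h1 ▸ h2 ▸ rfl)
      · -- v.1 = i and v.1 = i'+1, g i' = a i'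
        obtain ⟨hlt, hz⟩ := hg (i' : ℕ) i'.2 (by
          have : (⟨(i' : ℕ), i'.2⟩ : Fin n) = i' := Fin.ext rfl
          rw [this]; exact hc2)
        have hidx : (⟨(i' : ℕ) + 1, hlt⟩ : Fin n) = i := Fin.ext (show (i':ℕ)+1 = (i:ℕ) by omega)
        rw [hidx] at hz
        exact ne_zero_of_mem_edgeOf he hz
      · obtain ⟨hlt, hz⟩ := hg (i : ℕ) i.2 (by
          have : (⟨(i : ℕ), i.2⟩ : Fin n) = i := Fin.ext rfl
          rw [this]; exact hc1)
        have hidx : (⟨(i : ℕ) + 1, hlt⟩ : Fin n) = i' := Fin.ext (show (i:ℕ)+1 = (i':ℕ) by omega)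
        rw [hidx] at hz
        exact ne_zero_of_mem_edgeOf hf hz
      · exact hii (by omega)




variable {n : ℕ} {a : Fin n → ℕ} {ha : ∀ i, 0 < a i}

lemma encode_sub_val {g g' : ∀ i : Fin n, Fin (a i + 1)} (hg : Valid a g)
    (hsub : encode ha g ⊆ encode ha g') (i : Fin n) (hne : (g i : ℕ) ≠ 0) :
    (g' i : ℕ) = (g i : ℕ) := by
  obtain ⟨e, he⟩ : ∃ e, e ∈ edgeOf ha i (g i) := by
    by_cases hc : (g i : ℕ) = a i
    · obtain ⟨hlt, -⟩ := hg (i : ℕ) i.2 (by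
        have hii : (⟨(i : ℕ), i.2⟩ : Fin n) = i := Fin.ext rfl
        rw [hii]; exact hc)
      exact ⟨spine ha i hlt, mem_edgeOf.2 (Or.inl ⟨hlt, hc, rfl⟩)⟩
    · have hlt2 : (g i : ℕ) < a i := lt_of_le_of_ne (Nat.lt_succ_iff.1 (g i).2) hc
      exact ⟨pend ha i ⟨(g i : ℕ), hlt2⟩,
        mem_edgeOf.2 (Or.inr ⟨⟨(g i : ℕ), hlt2⟩, rfl, hne, rfl⟩)⟩
  have he2 : e ∈ encode ha g' := hsub (mem_encode.2 ⟨i, he⟩)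
  obtain ⟨i', he'⟩ := mem_encode.1 he2
  obtain ⟨hii, hcc⟩ := owner_unique he he'
  obtain rfl : i = i' := Fin.ext hii
  exact hcc.symm

lemma encode_injective (g g' : ∀ i : Fin n, Fin (a i + 1)) (hg : Valid a g) (hg' : Valid a g')
    (heq : encode ha g = encode ha g') : g = g' := by
  funext i
  by_cases h0 : (g i : ℕ) = 0
  · by_cases h0' : (g' i : ℕ) = 0
    · exact Fin.ext (h0.trans h0'.symm)
    · have := encode_sub_val hg' (fun e hx => heq ▸ hx) i h0'
      exact Fin.ext (by omega)
  · have := encode_sub_val hg (fun e hx => heq ▸ hx) i h0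
    exact Fin.ext this.symm

open Classical in
noncomputable def decode (ha : ∀ i, 0 < a i) (s : Finset (Sym2 (VV a))) (i : Fin n) :
    Fin (a i + 1) :=
  if _h : ∃ h' : (i : ℕ) + 1 < n, spine ha i h' ∈ s then ⟨a i, Nat.lt_succ_self _⟩
  else if hp : ∃ j : Fin (a i), (j : ℕ) ≠ 0 ∧ pend ha i j ∈ s then
    ⟨(hp.choose : ℕ), Nat.lt_succ_of_lt hp.choose.2⟩
  else ⟨0, Nat.succ_pos _⟩

section Decode

variable {s : Finset (Sym2 (VV a))}

lemma match_eq
    (hs2 : (↑s : Set (Sym2 (VV a))).Pairwise (fun e f => ∀ v : VV a, ¬(v ∈ e ∧ v ∈ f)))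
    {e f : Sym2 (VV a)} (he : e ∈ s) (hf : f ∈ s) (v : VV a)
    (hv : v ∈ e) (hv' : v ∈ f) : e = f := by
  by_contra hne
  exact hs2 (Finset.mem_coe.2 he) (Finset.mem_coe.2 hf) hne v ⟨hv, hv'⟩

lemma decode_val_spine {i : Fin n} {h' : (i : ℕ) + 1 < n} (hm : spine ha i h' ∈ s) :
    (decode ha s i : ℕ) = a i := by
  rw [decode, dif_pos ⟨h', hm⟩]

lemma decode_val_pend
    (hs2 : (↑s : Set (Sym2 (VV a))).Pairwise (fun e f => ∀ v : VV a, ¬(v ∈ e ∧ v ∈ f)))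
    {i : Fin n} {j : Fin (a i)} (hj : (j : ℕ) ≠ 0) (hm : pend ha i j ∈ s) :
    (decode ha s i : ℕ) = (j : ℕ) := by
  have hnsp : ¬∃ h' : (i : ℕ) + 1 < n, spine ha i h' ∈ s := by
    rintro ⟨h', hm'⟩
    exact pend_ne_spine hj
      (match_eq hs2 hm hm' (sv ha i) (mem_pend.2 (Or.inl rfl)) (mem_spine.2 (Or.inl rfl)))
  have hp : ∃ j0 : Fin (a i), (j0 : ℕ) ≠ 0 ∧ pend ha i j0 ∈ s := ⟨j, hj, hm⟩
  rw [decode, dif_neg hnsp, dif_pos hp]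
  obtain ⟨hc0, hcm⟩ := hp.choose_spec
  have hee := match_eq hs2 hcm hm (sv ha i) (mem_pend.2 (Or.inl rfl)) (mem_pend.2 (Or.inl rfl))
  exact (pend_inj hc0 hee).2

lemma spine_of_decode_eq {i : Fin n} (hd : (decode ha s i : ℕ) = a i) :
    ∃ h' : (i : ℕ) + 1 < n, spine ha i h' ∈ s := by
  by_contra hnsp
  rw [decode, dif_neg hnsp] at hd
  by_cases hp : ∃ j : Fin (a i), (j : ℕ) ≠ 0 ∧ pend ha i j ∈ s
  · rw [dif_pos hp] at hd
    have hd' : (hp.choose : ℕ) = a i := hd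
    have := hp.choose.2
    omega
  · rw [dif_neg hp] at hd
    have hd' : (0 : ℕ) = a i := hd
    have := ha i
    omega

lemma pend_mem_of_decode
    (hs2 : (↑s : Set (Sym2 (VV a))).Pairwise (fun e f => ∀ v : VV a, ¬(v ∈ e ∧ v ∈ f)))
    {i : Fin n} (h0 : (decode ha s i : ℕ) ≠ 0) (hne : (decode ha s i : ℕ) ≠ a i) :
    ∃ j : Fin (a i), (j : ℕ) = (decode ha s i : ℕ) ∧ (j : ℕ) ≠ 0 ∧ pend ha i j ∈ s := by
  by_cases hsp : ∃ h' : (i : ℕ) + 1 < n, spine ha i h' ∈ s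
  · exact absurd (decode_val_spine hsp.choose_spec) hne
  by_cases hp : ∃ j : Fin (a i), (j : ℕ) ≠ 0 ∧ pend ha i j ∈ s
  · obtain ⟨hc0, hcm⟩ := hp.choose_spec
    refine ⟨hp.choose, ?_, hc0, hcm⟩
    rw [decode, dif_neg hsp, dif_pos hp]
  · exfalso
    apply h0
    rw [decode, dif_neg hsp, dif_neg hp]

lemma decode_valid
    (hs2 : (↑s : Set (Sym2 (VV a))).Pairwise (fun e f => ∀ v : VV a, ¬(v ∈ e ∧ v ∈ f))) :
    Valid a (decode ha s) := by
  intro k hk hd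
  obtain ⟨hlt, hm⟩ := spine_of_decode_eq (s := s) hd
  refine ⟨hlt, ?_⟩
  by_contra hne0
  by_cases hca : (decode ha s ⟨k + 1, hlt⟩ : ℕ) = a ⟨k + 1, hlt⟩
  · obtain ⟨hlt2, hm2⟩ := spine_of_decode_eq hca
    have hshare := match_eq hs2 hm hm2 (sv ha ⟨k + 1, hlt⟩)
      (mem_spine.2 (Or.inr rfl)) (mem_spine.2 (Or.inl rfl))
    have hk1 : k = k + 1 := spine_inj hshare
    omega
  · obtain ⟨j, hjv, hj0, hjm⟩ := pend_mem_of_decode hs2 hne0 hca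
    have hshare := match_eq hs2 hm hjm (sv ha ⟨k + 1, hlt⟩)
      (mem_spine.2 (Or.inr rfl)) (mem_pend.2 (Or.inl rfl))
    exact pend_ne_spine hj0 hshare.symm

lemma encode_decode
    (hs1 : (↑s : Set (Sym2 (VV a))) ⊆ (caterpillar n a).edgeSet)
    (hs2 : (↑s : Set (Sym2 (VV a))).Pairwise (fun e f => ∀ v : VV a, ¬(v ∈ e ∧ v ∈ f))) :
    encode ha (decode ha s) = s := by
  ext e
  constructor
  · intro he
    obtain ⟨i, hei⟩ := mem_encode.1 he
    rcases mem_edgeOf.1 hei with ⟨h, hca, rfl⟩ | ⟨j, hj1, hj2, rfl⟩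
    · obtain ⟨h', hm⟩ := spine_of_decode_eq hca
      have hsp : spine ha i h = spine ha i h' := spine_congr rfl
      rw [hsp]; exact hm
    · have hne : (decode ha s i : ℕ) ≠ a i := by have := j.2; omega
      obtain ⟨j', hj'v, hj'0, hj'm⟩ := pend_mem_of_decode hs2 (by omega) hne
      have hpp : pend ha i j = pend ha i j' := pend_congr rfl (by omega)
      rw [hpp]; exact hj'm
  · intro he
    rcases edge_shape (ha := ha) (hs1 (Finset.mem_coe.2 he)) with ⟨i, h, rfl⟩ | ⟨i, j, hj0, rfl⟩
    · exact mem_encode.2 ⟨i, mem_edgeOf.2 (Or.inl ⟨h, decode_val_spine he, rfl⟩)⟩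
    · exact mem_encode.2 ⟨i, mem_edgeOf.2
        (Or.inr ⟨j, (decode_val_pend hs2 hj0 he).symm, hj0, rfl⟩)⟩

end Decode



lemma hosoya_eq_Acard {n : ℕ} {a : Fin n → ℕ} (ha : ∀ i, 0 < a i) :
    hosoya (caterpillar n a) = Acard n a := by
  rw [hosoya, ← Nat.card_coe_set_eq, Acard]
  apply Nat.card_congr
  apply Equiv.symm
  refine Equiv.ofBijective (fun g => ⟨encode ha g.1, encode_matching g.2⟩) ⟨?_, ?_⟩
  · intro g g' hgg
    apply Subtype.ext
    exact encode_injective g.1 g'.1 g.2 g'.2 (congrArg Subtype.val hgg)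
  · rintro ⟨s, hs1, hs2⟩
    exact ⟨⟨decode ha s, decode_valid hs2⟩, Subtype.ext (encode_decode hs1 hs2)⟩





end CatPf

theorem hosoya_caterpillar (n : ℕ) (hn : 1 ≤ n) (a : Fin n → ℕ)
    (ha : ∀ i, 0 < a i) (p : ℕ → ℕ)
    -- `p (k + 2)` represents the continued fraction numerator `p_k`,
    -- so `p 0 = p_{-2} = 0` and `p 1 = p_{-1} = 1`.
    (hp0 : p 0 = 0) (hp1 : p 1 = 1)
    (hprec : ∀ k (hk : k < n), p (k + 2) = a ⟨k, hk⟩ * p (k + 1) + p k) :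
    hosoya (caterpillar n a) = p (n + 1) := by
  rw [CatPf.hosoya_eq_Acard ha]
  exact CatPf.Acard_eq n a ha p hp0 hp1 hprec
end
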